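/- Let P(X) = X³ + √3·X² + 3 ∈ ℤ[√3][X] and 𝔭 = √3·ℤ[√3]. Then P is irreducible over ℤ[√3], and for any root α of P, the index ideal Ind_{ℤ[√3]}(P) = [O_L : ℤ[√3][α]] satisfies ν_𝔭(Ind(P)) ≥ 1; hence α does not generate a power integral basis of the integral closure O_L of ℤ[√3] in its quotient field extension generated by α. -/

import Mathlib

open Polynomial

/-- The length of an `R`-module `M` (the Krull dimension of its submodule lattice).  For a
Dedekind ring `R` and a nonzero prime `𝔭`, `ν_𝔭` of the index ideal `[O_L : R[α]]_R` equals
the length over `R_𝔭` of the localization at `𝔭` of `O_L ⧸ R[α]`. -/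

lemma three_nonsquare : ∀ n : ℤ, (3:ℤ) ≠ n * n := by
  intro n h
  have h1 : n ≤ 2 := by nlinarith
  have h2 : -2 ≤ n := by nlinarith
  interval_cases n <;> omega

lemma z3_norm_eq_zero (a : Zsqrtd 3) : a.norm = 0 ↔ a = 0 :=
  Zsqrtd.norm_eq_zero three_nonsquare a

lemma sq3_ne_zero : (Zsqrtd.sqrtd : Zsqrtd 3) ≠ 0 := by
  intro h
  have := congrArg Zsqrtd.im h
  simp at this

lemma sq3_sq : (Zsqrtd.sqrtd : Zsqrtd 3) * Zsqrtd.sqrtd = 3 := by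
  have := Zsqrtd.dmuld (d := 3)
  simpa using this

lemma z3_norm_sqrtd : (Zsqrtd.sqrtd : Zsqrtd 3).norm = -3 := by
  simp [Zsqrtd.norm_def]

lemma z3_three_ne_zero : (3 : Zsqrtd 3) ≠ 0 := by
  intro h
  have := congrArg Zsqrtd.re h
  simp at this

instance : NoZeroDivisors (Zsqrtd 3) where
  eq_zero_or_eq_zero_of_mul_eq_zero {a b} h := by
    have h2 : a.norm * b.norm = 0 := by rw [← Zsqrtd.norm_mul, h, Zsqrtd.norm_zero]
    rcases mul_eq_zero.mp h2 with h' | h'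
    · exact Or.inl ((z3_norm_eq_zero a).mp h')
    · exact Or.inr ((z3_norm_eq_zero b).mp h')

instance : Nontrivial (Zsqrtd 3) := ⟨⟨0, 1, fun h => by simpa using congrArg Zsqrtd.re h⟩⟩

instance : IsDomain (Zsqrtd 3) := NoZeroDivisors.to_isDomain _

lemma descent_aux (hp : Prime (Zsqrtd.sqrtd : Zsqrtd 3)) :
    ∀ n : ℕ, ∀ a b : Zsqrtd 3, b.norm.natAbs ≤ n →
      a ^ 3 + Zsqrtd.sqrtd * a ^ 2 * b + 3 * b ^ 3 = 0 → b = 0 := by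
  intro n
  induction n with
  | zero =>
    intro a b hn _
    have : b.norm = 0 := by omega
    exact (z3_norm_eq_zero b).mp this
  | succ n ih =>
    intro a b hn h
    by_cases hb : b = 0
    · exact hb
    have hdvd3 : (Zsqrtd.sqrtd : Zsqrtd 3) ∣ a ^ 3 := by
      refine ⟨-(a ^ 2 * b + Zsqrtd.sqrtd * b ^ 3), ?_⟩
      linear_combination h + b ^ 3 * sq3_sq
    obtain ⟨a', rfl⟩ := hp.dvd_of_dvd_pow hdvd3
    have h2 : (3 : Zsqrtd 3) * (Zsqrtd.sqrtd * a' ^ 3 + Zsqrtd.sqrtd * a' ^ 2 * b + b ^ 3) = 0 := by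
      linear_combination h - (Zsqrtd.sqrtd * a' ^ 3 + Zsqrtd.sqrtd * a' ^ 2 * b) * sq3_sq
    have h3 : Zsqrtd.sqrtd * a' ^ 3 + Zsqrtd.sqrtd * a' ^ 2 * b + b ^ 3 = 0 :=
      (mul_eq_zero.mp h2).resolve_left z3_three_ne_zero
    have hdvdb : (Zsqrtd.sqrtd : Zsqrtd 3) ∣ b ^ 3 := by
      refine ⟨-(a' ^ 3 + a' ^ 2 * b), ?_⟩
      linear_combination h3
    obtain ⟨b', rfl⟩ := hp.dvd_of_dvd_pow hdvdb
    have h4 : (Zsqrtd.sqrtd : Zsqrtd 3) * (a' ^ 3 + Zsqrtd.sqrtd * a' ^ 2 * b' + 3 * b' ^ 3) = 0 := by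
      linear_combination h3 - Zsqrtd.sqrtd * b' ^ 3 * sq3_sq
    have h5 : a' ^ 3 + Zsqrtd.sqrtd * a' ^ 2 * b' + 3 * b' ^ 3 = 0 :=
      (mul_eq_zero.mp h4).resolve_left sq3_ne_zero
    have hb' : b' ≠ 0 := by
      intro hb'; apply hb; rw [hb', mul_zero]
    have hnormb : (Zsqrtd.sqrtd * b' : Zsqrtd 3).norm.natAbs = 3 * b'.norm.natAbs := by
      rw [Zsqrtd.norm_mul, z3_norm_sqrtd, Int.natAbs_mul]; norm_num
    have hb'norm : b'.norm ≠ 0 := fun hh => hb' ((z3_norm_eq_zero b').mp hh)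
    have : b'.norm.natAbs ≤ n := by
      have h1 : 1 ≤ b'.norm.natAbs := by omega
      omega
    exact absurd (ih a' b' this h5) hb'

lemma descent (hp : Prime (Zsqrtd.sqrtd : Zsqrtd 3)) (a b : Zsqrtd 3)
    (h : a ^ 3 + Zsqrtd.sqrtd * a ^ 2 * b + 3 * b ^ 3 = 0) : b = 0 :=
  descent_aux hp _ a b le_rfl h

lemma noRootK {K : Type*} [Field K] [Algebra (Zsqrtd 3) K] [IsFractionRing (Zsqrtd 3) K]
    (hp : Prime (Zsqrtd.sqrtd : Zsqrtd 3)) (x : K) :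
    x ^ 3 + algebraMap (Zsqrtd 3) K Zsqrtd.sqrtd * x ^ 2 + 3 ≠ 0 := by
  intro h
  obtain ⟨a, b, hb, rfl⟩ := IsFractionRing.div_surjective (A := Zsqrtd 3) x
  have hb0 : b ≠ 0 := nonZeroDivisors.ne_zero hb
  have hinj := IsFractionRing.injective (Zsqrtd 3) K
  have hfb : algebraMap (Zsqrtd 3) K b ≠ 0 := by
    simpa using (map_ne_zero_iff _ hinj).mpr hb0
  field_simp at h
  set fa := algebraMap (Zsqrtd 3) K a
  set fb := algebraMap (Zsqrtd 3) K b
  set fs := algebraMap (Zsqrtd 3) K Zsqrtd.sqrtd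
  have h3 : (fa ^ 3 + fs * fa ^ 2 * fb + 3 * fb ^ 3) * fb ^ 2 = 0 := by linear_combination fb ^ 2 * h
  have h4 : fa ^ 3 + fs * fa ^ 2 * fb + 3 * fb ^ 3 = 0 :=
    (mul_eq_zero.mp h3).resolve_right (pow_ne_zero 2 hfb)
  have h2 : a ^ 3 + Zsqrtd.sqrtd * a ^ 2 * b + 3 * b ^ 3 = 0 := by
    apply hinj
    rw [map_zero, map_add, map_add, map_mul, map_mul, map_mul, map_pow, map_pow, map_pow,
      map_ofNat]
    linear_combination h4
  exact hb0 (descent hp a b h2)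

/-- The length of an `R`-module `M` (the Krull dimension of its submodule lattice).  For a
Dedekind ring `R` and a nonzero prime `𝔭`, `ν_𝔭` of the index ideal `[O_L : R[α]]_R` equals
the length over `R_𝔭` of the localization at `𝔭` of `O_L ⧸ R[α]`. -/
noncomputable def moduleLength (R M : Type*) [Semiring R] [AddCommGroup M] [Module R M] : ℕ∞ :=
  WithBot.unbotD 0 (Order.krullDim (Submodule R M))

lemma one_le_unbot' {k : WithBot ℕ∞} (h : (1 : WithBot ℕ∞) ≤ k) : (1 : ℕ∞) ≤ WithBot.unbotD 0 k := by
  cases k with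
  | bot => simp at h
  | coe a => simpa using h


/-- **Concrete example.** Let `P = X³ + √3·X² + 3 ∈ ℤ[√3][X]` and
`𝔭 = √3·ℤ[√3]`.  Then `P` is irreducible over `ℤ[√3]` and for any root `α` of `P`
(generating `L = K(α)` over the quotient field `K` of `ℤ[√3]`), the index ideal
`Ind(P) = [O_L : ℤ[√3][α]]` satisfies `ν_𝔭(Ind(P)) ≥ 1`; hence `α` does not generate a
power integral basis of the integral closure `O_L` of `ℤ[√3]` in `L`. -/
theorem stmt12 (𝔭 : Ideal (Zsqrtd 3)) (h𝔭 : 𝔭 = Ideal.span {Zsqrtd.sqrtd}) [𝔭.IsPrime]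
    (K L : Type*) [Field K] [Field L] [Algebra (Zsqrtd 3) K] [IsFractionRing (Zsqrtd 3) K]
    [Algebra K L] [Algebra (Zsqrtd 3) L] [IsScalarTower (Zsqrtd 3) K L]
    [FiniteDimensional K L] [Algebra.IsSeparable K L]
    (P : (Zsqrtd 3)[X]) (hP : P = X ^ 3 + C Zsqrtd.sqrtd * X ^ 2 + C 3)
    (α : L) (hroot : aeval α P = 0) (hgen : Algebra.adjoin K {α} = ⊤) :
    Irreducible P ∧
      (1 : ℕ∞) ≤ moduleLength (Localization.AtPrime 𝔭)
        (LocalizedModule 𝔭.primeCompl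
          (↥(Subalgebra.toSubmodule (integralClosure (Zsqrtd 3) L)) ⧸
            Submodule.comap (Subalgebra.toSubmodule (integralClosure (Zsqrtd 3) L)).subtype
              (Subalgebra.toSubmodule (Algebra.adjoin (Zsqrtd 3) {α})))) ∧
      Algebra.adjoin (Zsqrtd 3) {α} ≠ integralClosure (Zsqrtd 3) L := by
  have hPrimeIdeal : (Ideal.span {Zsqrtd.sqrtd} : Ideal (Zsqrtd 3)).IsPrime := h𝔭 ▸ ‹𝔭.IsPrime›
  have hprime : Prime (Zsqrtd.sqrtd : Zsqrtd 3) :=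
    (Ideal.span_singleton_prime sq3_ne_zero).mp hPrimeIdeal
  have hPm : P.Monic := by rw [hP]; monicity!
  have hnd : P.natDegree = 3 := by rw [hP]; compute_degree!
  -- Part 1 : irreducibility
  have hIrr : Irreducible P := by
    rw [hPm.irreducible_iff_roots_eq_zero_of_degree_le_three (by omega) (by omega),
      Multiset.eq_zero_iff_forall_notMem]
    intro r hr
    rw [mem_roots hPm.ne_zero] at hr
    have heval : r ^ 3 + Zsqrtd.sqrtd * r ^ 2 * 1 + 3 * 1 ^ 3 = 0 := by
      have h := hr
      rw [IsRoot, hP] at h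
      simp only [eval_add, eval_mul, eval_pow, eval_X, eval_C] at h
      linear_combination h
    have := descent hprime r 1 heval
    simp at this
  -- setup
  have hinjK : Function.Injective (algebraMap (Zsqrtd 3) K) := IsFractionRing.injective _ _
  have hinjL : Function.Injective (algebraMap (Zsqrtd 3) L) := by
    rw [IsScalarTower.algebraMap_eq (Zsqrtd 3) K L, RingHom.coe_comp]
    exact (algebraMap K L).injective.comp hinjK
  set s : L := algebraMap (Zsqrtd 3) L Zsqrtd.sqrtd with hs
  have hs0 : s ≠ 0 := fun h => sq3_ne_zero (hinjL (by rw [map_zero]; exact h))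
  have hs2 : s * s = 3 := by rw [hs, ← map_mul, sq3_sq, map_ofNat]
  have hα : α ^ 3 + s * α ^ 2 + 3 = 0 := by
    rw [hP] at hroot
    simp only [map_add, map_mul, map_pow, aeval_X, aeval_C, map_ofNat] at hroot
    exact hroot
  have hKint : IsIntegral K α :=
    ⟨P.map (algebraMap (Zsqrtd 3) K), hPm.map _, by
      rw [← aeval_def, aeval_map_algebraMap]; exact hroot⟩
  -- key lemma A : no nonzero polynomial of degree ≤ 2 annihilates α
  have keyA : ∀ Q : (Zsqrtd 3)[X], Q.natDegree ≤ 2 → aeval α Q = 0 → Q = 0 := by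
    intro Q hdeg hQ
    by_contra hQ0
    have hQk0 : Q.map (algebraMap (Zsqrtd 3) K) ≠ 0 := (Polynomial.map_ne_zero_iff hinjK).mpr hQ0
    have hmdvd : minpoly K α ∣ Q.map (algebraMap (Zsqrtd 3) K) :=
      minpoly.dvd K α (by rwa [aeval_map_algebraMap])
    have h1 : 0 < (minpoly K α).natDegree := minpoly.natDegree_pos hKint
    have h2 : (minpoly K α).natDegree ≤ 2 :=
      le_trans (natDegree_le_of_dvd hmdvd hQk0) (le_trans natDegree_map_le hdeg)
    obtain ⟨c, hc⟩ := minpoly.dvd K α (p := P.map (algebraMap (Zsqrtd 3) K))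
      (by rw [aeval_map_algebraMap]; exact hroot)
    have hPkm : (P.map (algebraMap (Zsqrtd 3) K)).Monic := hPm.map _
    have hPknd : (P.map (algebraMap (Zsqrtd 3) K)).natDegree = 3 := by
      rw [hPm.natDegree_map]; exact hnd
    have hm0 : minpoly K α ≠ 0 := minpoly.ne_zero hKint
    have hc0 : c ≠ 0 := by rintro rfl; rw [mul_zero] at hc; exact hPkm.ne_zero hc
    have hsum : (minpoly K α).natDegree + c.natDegree = 3 := by
      rw [← natDegree_mul hm0 hc0, ← hc, hPknd]
    obtain ⟨x, hx⟩ : ∃ x : K, eval x (P.map (algebraMap (Zsqrtd 3) K)) = 0 := by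
      rcases (by omega : (minpoly K α).natDegree = 1 ∨ (minpoly K α).natDegree = 2) with h | h
      · refine ⟨-((minpoly K α).coeff 0), ?_⟩
        rw [hc, eval_mul]
        have hz : eval (-((minpoly K α).coeff 0)) (minpoly K α) = 0 := by
          rw [(minpoly.monic hKint).eq_X_add_C h]; simp
        rw [hz, zero_mul]
      · have hcm : c.Monic := (minpoly.monic hKint).of_mul_monic_left (hc ▸ hPkm)
        have hc1 : c.natDegree = 1 := by omega
        refine ⟨-(c.coeff 0), ?_⟩
        rw [hc, eval_mul]
        have hz : eval (-(c.coeff 0)) c = 0 := by rw [hcm.eq_X_add_C hc1]; simp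
        rw [hz, mul_zero]
    apply noRootK hprime x
    rw [hP] at hx
    simp only [Polynomial.map_add, Polynomial.map_mul, Polynomial.map_pow, map_X, map_C,
      Polynomial.map_ofNat, eval_add, eval_mul, eval_pow, eval_X, eval_C, eval_ofNat,
      map_ofNat] at hx
    exact hx
  -- the element β = α² / √3
  set β : L := s⁻¹ * α ^ 2 with hβ
  have hsβ : s * β = α ^ 2 := by rw [hβ, ← mul_assoc, mul_inv_cancel₀ hs0, one_mul]
  have h6 : α ^ 6 - 3 * α ^ 4 - 6 * s * α ^ 2 - 9 = 0 := by
    linear_combination (α ^ 3 - s * α ^ 2 - 3) * hα + α ^ 4 * hs2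
  have hβcube : β ^ 3 - s * β ^ 2 - 2 * s * β - s = 0 := by
    have hs3 : s ^ 3 ≠ 0 := pow_ne_zero _ hs0
    have hmul : s ^ 3 * (β ^ 3 - s * β ^ 2 - 2 * s * β - s) = s ^ 3 * 0 := by
      rw [mul_zero]
      calc s ^ 3 * (β ^ 3 - s * β ^ 2 - 2 * s * β - s)
          = (s * β) ^ 3 - (s * s) * ((s * β) * (s * β)) - 2 * (s * s) * (s * (s * β))
            - (s * s) * (s * s) := by ring
        _ = (α ^ 2) ^ 3 - 3 * (α ^ 2 * α ^ 2) - 2 * 3 * (s * α ^ 2) - 3 * 3 := by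
            rw [hsβ, hs2]
        _ = 0 := by linear_combination h6
    exact mul_left_cancel₀ hs3 hmul
  have hβint : IsIntegral (Zsqrtd 3) β := by
    refine ⟨X ^ 3 - C Zsqrtd.sqrtd * X ^ 2 - C (2 * Zsqrtd.sqrtd) * X - C Zsqrtd.sqrtd, ?_, ?_⟩
    · monicity!
    · rw [← aeval_def]
      simp only [map_sub, map_mul, map_pow, aeval_X, aeval_C, map_ofNat, map_mul]
      linear_combination hβcube
  -- key lemma C
  have keyC : ∀ u : Zsqrtd 3,
      algebraMap (Zsqrtd 3) L u * β ∈ Algebra.adjoin (Zsqrtd 3) {α} → Zsqrtd.sqrtd ∣ u := by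
    intro u hu
    rw [Algebra.adjoin_singleton_eq_range_aeval] at hu
    obtain ⟨q, hq⟩ := hu
    have hq' : aeval α q = algebraMap (Zsqrtd 3) L u * β := hq
    set r := q %ₘ P with hrdef
    have hrd : r.natDegree ≤ 2 := by
      have h3 := natDegree_modByMonic_lt q hPm (fun h1 => by rw [h1] at hnd; simp at hnd)
      rw [← hrdef, hnd] at h3
      omega
    have har : aeval α r = algebraMap (Zsqrtd 3) L u * β := by
      rw [← hq']
      conv_rhs => rw [← modByMonic_add_div q P]
      rw [map_add, map_mul, hroot, zero_mul, add_zero, hrdef]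
    have hQ0 : C Zsqrtd.sqrtd * r - C u * X ^ 2 = 0 := by
      apply keyA
      · refine le_trans (natDegree_sub_le _ _) (max_le (le_trans (natDegree_C_mul_le _ _) hrd) ?_)
        exact le_trans (natDegree_C_mul_le _ _) (natDegree_X_pow 2).le
      · rw [map_sub, map_mul, map_mul, aeval_C, aeval_C, map_pow, aeval_X, har, ← hs]
        linear_combination (algebraMap (Zsqrtd 3) L u) * hsβ
    have hco := congrArg (fun p => coeff p 2) hQ0
    simp only [coeff_sub, coeff_C_mul, coeff_X_pow, coeff_zero] at hco
    norm_num at hco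
    exact ⟨r.coeff 2, by linear_combination -hco⟩
  refine ⟨hIrr, ?_, ?_⟩
  · -- Part 2
    have hβO : β ∈ Subalgebra.toSubmodule (integralClosure (Zsqrtd 3) L) := hβint
    set N : Submodule (Zsqrtd 3) ↥(Subalgebra.toSubmodule (integralClosure (Zsqrtd 3) L)) :=
      Submodule.comap (Subalgebra.toSubmodule (integralClosure (Zsqrtd 3) L)).subtype
        (Subalgebra.toSubmodule (Algebra.adjoin (Zsqrtd 3) {α})) with hN
    set m : _ ⧸ N := Submodule.Quotient.mk ⟨β, hβO⟩ with hm
    set x : LocalizedModule 𝔭.primeCompl (_ ⧸ N) := LocalizedModule.mk m 1 with hx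
    have hx0 : x ≠ 0 := by
      intro hx00
      rw [hx, show (0 : LocalizedModule 𝔭.primeCompl (_ ⧸ N)) = LocalizedModule.mk 0 1 from
        (LocalizedModule.zero_mk 1).symm] at hx00
      obtain ⟨c, hc⟩ := LocalizedModule.mk_eq.mp hx00
      simp only [one_smul, smul_zero] at hc
      rw [Submonoid.smul_def, hm, ← Submodule.Quotient.mk_smul,
        Submodule.Quotient.mk_eq_zero, hN, Submodule.mem_comap] at hc
      have hmem : algebraMap (Zsqrtd 3) L (c : Zsqrtd 3) * β ∈ Algebra.adjoin (Zsqrtd 3) {α} := by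
        simpa [Algebra.smul_def] using hc
      have hdvd := keyC _ hmem
      have hcp : (c : Zsqrtd 3) ∈ Ideal.span {Zsqrtd.sqrtd} := Ideal.mem_span_singleton.mpr hdvd
      rw [← h𝔭] at hcp
      exact c.2 hcp
    have hlt : (⊥ : Submodule (Localization.AtPrime 𝔭)
        (LocalizedModule 𝔭.primeCompl (_ ⧸ N))) < ⊤ := by
      rw [lt_top_iff_ne_top]
      intro h
      exact hx0 ((Submodule.mem_bot _).mp (h.symm ▸ Submodule.mem_top))
    let ch : LTSeries (Submodule (Localization.AtPrime 𝔭)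
        (LocalizedModule 𝔭.primeCompl (_ ⧸ N))) :=
      ⟨1, ![⊥, ⊤], fun i => by fin_cases i; simpa using hlt⟩
    have hk := Order.LTSeries.length_le_krullDim ch
    unfold moduleLength
    exact one_le_unbot' (by exact_mod_cast hk)
  · -- Part 3
    intro heq
    have hβmem : β ∈ integralClosure (Zsqrtd 3) L := hβint
    rw [← heq] at hβmem
    have hdvd : Zsqrtd.sqrtd ∣ (1 : Zsqrtd 3) := keyC 1 (by rwa [map_one, one_mul])
    exact hprime.not_unit (isUnit_of_dvd_one hdvd)
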